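/- (Proposition 4, cycle trace formula) Let d and κ be positive integers, let π be a permutation of Fin κ, and let A : Fin κ → Matrix (Fin d) (Fin d) ℂ. Then Tr((⨂ᵢ Aᵢ) · V(π)) equals the product, over the orbits of π on Fin κ, of the traces of the matrix products along each orbit: for an orbit of size m containing a representative l, the corresponding factor is Tr(A l · A (π⁻¹ l) · A (π⁻² l) · ⋯ · A (π^{−(m−1)} l)), and this factor is independent of the choice of representative l. -/

import Mathlib

noncomputable section

open Matrix

/-- The permutation operator `V(π)` on `(ℂ^d)^{⊗κ}`. -/
def permOp (d κ : ℕ) (π : Equiv.Perm (Fin κ)) :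
    Matrix (Fin κ → Fin d) (Fin κ → Fin d) ℂ :=
  Matrix.of fun f g => if f = g ∘ ⇑π⁻¹ then 1 else 0

/-- The tensor product `⨂ᵢ Aᵢ` of a family of `d × d` matrices. -/
def tensorProd (d κ : ℕ) (A : Fin κ → Matrix (Fin d) (Fin d) ℂ) :
    Matrix (Fin κ → Fin d) (Fin κ → Fin d) ℂ :=
  Matrix.of fun f g => ∏ i, A i (f i) (g i)

/-- The factor associated to the orbit (cycle) of `π` through `l`: the trace of the
ordered product `A l · A (π⁻¹ l) · A (π⁻² l) ⋯ A (π^{-(m-1)} l)`, where `m` is the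
size of the orbit of `l` (its minimal period under `π`). -/
def orbitFactor (d κ : ℕ) (π : Equiv.Perm (Fin κ))
    (A : Fin κ → Matrix (Fin d) (Fin d) ℂ) (l : Fin κ) : ℂ :=
  (((List.range (Function.minimalPeriod (⇑π) l)).map
      (fun m => A (((π ^ m)⁻¹ : Equiv.Perm (Fin κ)) l))).prod).trace

/-- Entries of a product of a list of matrices as a sum over paths. -/
private lemma entry_lemma (d : ℕ) (n : ℕ) :
    ∀ (B : ℕ → Matrix (Fin d) (Fin d) ℂ) (a b : Fin d),
    (((List.range n).map B).prod) a b =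
      ∑ x : Fin n → Fin d,
        if (Fin.cons a x : Fin (n+1) → Fin d) (Fin.last n) = b then
          ∏ m : Fin n, B m.val ((Fin.cons a x : Fin (n+1) → Fin d) m.castSucc) (x m)
        else 0 := by
  induction n with
  | zero =>
    intro B a b
    simp [Matrix.one_apply]
  | succ n ih =>
    intro B a b
    rw [List.range_succ_eq_map, List.map_cons, List.map_map, List.prod_cons, Matrix.mul_apply]
    have hsplit := Fintype.sum_equiv (Fin.consEquiv (fun _ : Fin (n+1) => Fin d))
      (fun p : Fin d × (Fin n → Fin d) =>
        B 0 a p.1 *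
          if (Fin.cons p.1 p.2 : Fin (n+1) → Fin d) (Fin.last n) = b then
            ∏ m : Fin n, (B ∘ Nat.succ) m.val ((Fin.cons p.1 p.2 : Fin (n+1) → Fin d) m.castSucc) (p.2 m)
          else 0)
      (fun x : Fin (n+1) → Fin d =>
        if (Fin.cons a x : Fin (n+2) → Fin d) (Fin.last (n+1)) = b then
          ∏ m : Fin (n+1), B m.val ((Fin.cons a x : Fin (n+2) → Fin d) m.castSucc) (x m)
        else 0)
      (by
        rintro ⟨c, x⟩
        dsimp only
        have hE : (Fin.consEquiv (fun _ : Fin (n+1) => Fin d)) (c, x) = Fin.cons c x := rfl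
        rw [hE]
        have h1 : (Fin.cons a (Fin.cons c x) : Fin (n+2) → Fin d) (Fin.last (n+1)) = (Fin.cons c x : Fin (n+1) → Fin d) (Fin.last n) := by
          rw [← Fin.succ_last, Fin.cons_succ]
        rw [h1, mul_ite, mul_zero]
        congr 1
        try (rw [Fin.prod_univ_succ]
             congr 1))
    rw [← hsplit, Fintype.sum_prod_type]
    apply Finset.sum_congr rfl
    intro c _
    rw [ih (B ∘ Nat.succ) c b, Finset.mul_sum]

/-- Trace of a product of a list of matrices as a sum over cyclic paths. -/
private lemma trace_lemma (d k : ℕ) (B : ℕ → Matrix (Fin d) (Fin d) ℂ) :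
    (((List.range (k+1)).map B).prod).trace
      = ∑ x : Fin (k+1) → Fin d, ∏ m : Fin (k+1), B m.val (x m) (x (m + 1)) := by
  rw [Matrix.trace]
  simp only [Matrix.diag_apply]
  calc ∑ a, (((List.range (k+1)).map B).prod) a a
      = ∑ a, ∑ x : Fin (k+1) → Fin d,
          if x (Fin.last k) = a then
            ∏ m : Fin (k+1), B m.val ((Fin.cons a x : Fin (k+2) → Fin d) m.castSucc) (x m) else 0 := by
        apply Finset.sum_congr rfl
        intro a _
        rw [entry_lemma d (k+1) B a a]
        apply Finset.sum_congr rfl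
        intro x _
        congr 1
        try rw [← Fin.succ_last, Fin.cons_succ]
    _ = ∑ x : Fin (k+1) → Fin d, ∑ a,
          if x (Fin.last k) = a then
            ∏ m : Fin (k+1), B m.val ((Fin.cons a x : Fin (k+2) → Fin d) m.castSucc) (x m) else 0 := Finset.sum_comm
    _ = ∑ x : Fin (k+1) → Fin d,
          ∏ m : Fin (k+1), B m.val ((Fin.cons (x (Fin.last k)) x : Fin (k+2) → Fin d) m.castSucc) (x m) := by
        apply Finset.sum_congr rfl
        intro x _
        rw [Finset.sum_ite_eq, if_pos (Finset.mem_univ _)]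
    _ = ∑ x : Fin (k+1) → Fin d, ∏ m : Fin (k+1), B m.val (x m) (x (m + 1)) := by
        refine (Fintype.sum_equiv
          (⟨fun y i => y (i + 1), fun x i => x (i - 1),
            fun y => funext fun i => by show y (i - 1 + 1) = y i; rw [sub_add_cancel],
            fun x => funext fun i => by show x (i + 1 - 1) = x i; rw [add_sub_cancel_right]⟩ :
              (Fin (k+1) → Fin d) ≃ (Fin (k+1) → Fin d))
          _ _ ?_).symm
        intro y
        simp only [Equiv.coe_fn_mk]
        have hc : ∀ m : Fin (k+1),
            (Fin.cons (y (Fin.last k + 1)) (fun i : Fin (k+1) => y (i + 1)) : Fin (k+2) → Fin d) m.castSucc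
              = y m := by
          intro m
          induction m using Fin.cases with
          | zero =>
            rw [Fin.castSucc_zero, Fin.cons_zero, Fin.last_add_one]
          | succ j =>
            rw [← Fin.succ_castSucc, Fin.cons_succ]
            congr 1
            exact Fin.coeSucc_eq_succ
        apply Finset.prod_congr rfl
        intro m _
        rw [hc m]


private lemma aux_period {κ : ℕ} (π : Equiv.Perm (Fin κ)) (l : Fin κ) (c : ℕ) :
    (π ^ (Function.minimalPeriod (⇑π) l * c)) l = l := by
  have h : Function.IsPeriodicPt (⇑π) (Function.minimalPeriod (⇑π) l * c) l :=
    (Function.isPeriodicPt_minimalPeriod (⇑π) l).mul_const c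
  calc (π ^ (Function.minimalPeriod (⇑π) l * c)) l
      = (⇑π)^[Function.minimalPeriod (⇑π) l * c] l := by rw [Equiv.Perm.coe_pow]
    _ = l := h

private lemma aux_inv_period {κ : ℕ} (π : Equiv.Perm (Fin κ)) (l : Fin κ) (c : ℕ) :
    ((π ^ (Function.minimalPeriod (⇑π) l * c))⁻¹) l = l := by
  have hp := aux_period π l c
  calc (π ^ (Function.minimalPeriod (⇑π) l * c))⁻¹ l
      = (π ^ (Function.minimalPeriod (⇑π) l * c))⁻¹
          ((π ^ (Function.minimalPeriod (⇑π) l * c)) l) := by rw [hp]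
    _ = l := Equiv.symm_apply_apply _ _

private lemma aux_pos {κ : ℕ} (π : Equiv.Perm (Fin κ)) (l : Fin κ) :
    0 < Function.minimalPeriod (⇑π) l := by
  rw [Function.minimalPeriod_pos_iff_mem_periodicPts, Function.mem_periodicPts]
  refine ⟨orderOf π, orderOf_pos π, ?_⟩
  show (⇑π)^[orderOf π] l = l
  rw [← Equiv.Perm.coe_pow, pow_orderOf_eq_one]
  rfl

private lemma aux_mod {κ : ℕ} (π : Equiv.Perm (Fin κ)) (l : Fin κ) (a : ℕ) :
    (π ^ (a % Function.minimalPeriod (⇑π) l))⁻¹ l = (π ^ a)⁻¹ l := by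
  conv_rhs => rw [← Nat.div_add_mod a (Function.minimalPeriod (⇑π) l)]
  rw [pow_add, _root_.mul_inv_rev, Equiv.Perm.mul_apply]
  congr 1
  exact (aux_inv_period π l _).symm

private lemma orbit_expand (d κ : ℕ) (π : Equiv.Perm (Fin κ))
    (A : Fin κ → Matrix (Fin d) (Fin d) ℂ) (l : Fin κ) (S : Fin κ → Fin κ)
    (hfix : ∀ i, S (π⁻¹ i) = S i)
    (hS : ∀ i, S i = l ↔ π.SameCycle l i) :
    orbitFactor d κ π A l
      = ∑ h : {i : Fin κ // S i = l} → Fin d,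
          ∏ i : {i : Fin κ // S i = l},
            A i.1 (h i) (h ⟨π⁻¹ i.1, by rw [hfix]; exact i.2⟩) := by
  obtain ⟨k, hk⟩ : ∃ k, Function.minimalPeriod (⇑π) l = k + 1 :=
    ⟨Function.minimalPeriod (⇑π) l - 1, (Nat.succ_pred_eq_of_pos (aux_pos π l)).symm⟩
  have hmod : ∀ a : ℕ, (π ^ (a % (k+1)))⁻¹ l = (π ^ a)⁻¹ l := by
    intro a
    rw [← hk]
    exact aux_mod π l a
  have hperiod : ∀ c : ℕ, (π ^ ((k+1) * c)) l = l := by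
    intro c
    rw [← hk]
    exact aux_period π l c
  have hmem : ∀ m : ℕ, S ((π ^ m)⁻¹ l) = l := by
    intro m
    rw [hS]
    exact ⟨-(m : ℤ), by simp⟩
  let φ : Fin (k+1) → {i : Fin κ // S i = l} := fun m => ⟨(π ^ (m : ℕ))⁻¹ l, hmem m⟩
  have key : ∀ a b : ℕ, a ≤ b → b < k + 1 → (π ^ a)⁻¹ l = (π ^ b)⁻¹ l → a = b := by
    intro a b hab hbn hEq
    by_contra hne
    have hfp : (π ^ (b - a)) l = l := by
      have h2 : (π ^ (b - a)) ((π ^ a) ((π ^ b)⁻¹ l)) = l := by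
        rw [← Equiv.Perm.mul_apply, ← pow_add, Nat.sub_add_cancel hab]
        exact Equiv.apply_symm_apply _ _
      rw [← hEq, Equiv.Perm.inv_def (π ^ a), Equiv.apply_symm_apply] at h2
      exact h2
    have hper : Function.IsPeriodicPt (⇑π) (b - a) l := by
      show (⇑π)^[b - a] l = l
      rw [← Equiv.Perm.coe_pow]
      exact hfp
    have hlen : k + 1 ≤ b - a := by
      rw [← hk]
      exact hper.minimalPeriod_le (by omega)
    omega
  have hinj : Function.Injective φ := by
    intro m₁ m₂ h
    have hv : (π ^ (m₁ : ℕ))⁻¹ l = (π ^ (m₂ : ℕ))⁻¹ l := congrArg Subtype.val h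
    rcases le_total (m₁ : ℕ) (m₂ : ℕ) with hle | hle
    · exact Fin.ext (key _ _ hle m₂.isLt hv)
    · exact (Fin.ext (key _ _ hle m₁.isLt hv.symm)).symm
  have hsurj : Function.Surjective φ := by
    rintro ⟨i, hi⟩
    obtain ⟨j, hj0, hjle, hj⟩ := ((hS i).mp hi).exists_pow_eq π
    have hnpos : 0 < k + 1 := Nat.succ_pos k
    have hjn : j % (k+1) < k + 1 := Nat.mod_lt _ hnpos
    refine ⟨⟨(k + 1 - j % (k+1)) % (k+1), Nat.mod_lt _ hnpos⟩, ?_⟩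
    apply Subtype.ext
    show (π ^ ((k + 1 - j % (k+1)) % (k+1)))⁻¹ l = i
    have hsum : ((k + 1 - j % (k+1)) % (k+1) + j) % (k+1) = 0 := by
      have h3 : j % (k+1) + (k+1) * (j / (k+1)) = j := Nat.mod_add_div j (k+1)
      have h2 : (k + 1 - j % (k+1)) + j = (k+1) * (1 + j / (k+1)) := by
        calc (k + 1 - j % (k+1)) + j
            = (k + 1 - j % (k+1)) + (j % (k+1) + (k+1) * (j / (k+1))) := by rw [h3]
          _ = ((k + 1 - j % (k+1)) + j % (k+1)) + (k+1) * (j / (k+1)) := by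
              rw [add_assoc]
          _ = (k + 1) + (k+1) * (j / (k+1)) := by
              rw [Nat.sub_add_cancel (le_of_lt hjn)]
          _ = (k+1) * (1 + j / (k+1)) := by ring
      rw [Nat.mod_add_mod, h2, Nat.mul_mod_right]
    obtain ⟨c, hc⟩ : (k+1) ∣ ((k + 1 - j % (k+1)) % (k+1) + j) :=
      Nat.dvd_of_mod_eq_zero hsum
    have hper : (π ^ ((k + 1 - j % (k+1)) % (k+1) + j)) l = l := by
      rw [hc]
      exact hperiod c
    rw [← hj]
    calc (π ^ ((k + 1 - j % (k+1)) % (k+1)))⁻¹ l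
        = (π ^ ((k + 1 - j % (k+1)) % (k+1)))⁻¹
            ((π ^ ((k + 1 - j % (k+1)) % (k+1) + j)) l) := by rw [hper]
      _ = (π ^ ((k + 1 - j % (k+1)) % (k+1)))⁻¹
            ((π ^ ((k + 1 - j % (k+1)) % (k+1))) ((π ^ j) l)) := by
          rw [pow_add, Equiv.Perm.mul_apply]
      _ = (π ^ j) l := Equiv.symm_apply_apply _ _
  let e : Fin (k+1) ≃ {i : Fin κ // S i = l} := Equiv.ofBijective φ ⟨hinj, hsurj⟩
  have horb : orbitFactor d κ π A l
      = ∑ x : Fin (k+1) → Fin d,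
          ∏ m : Fin (k+1), A ((π ^ (m : ℕ))⁻¹ l) (x m) (x (m + 1)) := by
    unfold orbitFactor
    rw [hk]
    exact trace_lemma d k (fun m => A ((π ^ m)⁻¹ l))
  rw [horb]
  apply Fintype.sum_equiv (Equiv.arrowCongr e (Equiv.refl (Fin d)))
  intro x
  apply Fintype.prod_equiv e
  intro m
  have hval : ((m + 1 : Fin (k+1)) : ℕ) = ((m : ℕ) + 1) % (k+1) := by
    rw [Fin.val_add, Fin.val_one', Nat.add_mod_mod]
  have hsymm : ∀ hx : S (π⁻¹ ((π ^ (m : ℕ))⁻¹ l)) = l,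
      e.symm ⟨π⁻¹ ((π ^ (m : ℕ))⁻¹ l), hx⟩ = m + 1 := by
    intro hx
    rw [Equiv.symm_apply_eq]
    apply Subtype.ext
    show π⁻¹ ((π ^ (m : ℕ))⁻¹ l) = ((π ^ (((m + 1 : Fin (k+1))) : ℕ))⁻¹) l
    rw [hval, hmod, pow_succ, _root_.mul_inv_rev]
    rfl
  show A ((π ^ (m : ℕ))⁻¹ l) (x m) (x (m + 1))
      = A ((e m).1) (x (e.symm (e m))) (x (e.symm ⟨π⁻¹ (e m).1, _⟩))
  rw [Equiv.symm_apply_apply]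
  have h6 : e.symm (⟨π⁻¹ ((e m).1), by rw [hfix]; exact (e m).2⟩ : {i : Fin κ // S i = l})
      = m + 1 := hsymm _
  exact congrArg (fun z => A ((π ^ (m : ℕ))⁻¹ l) (x m) (x z)) h6.symm

theorem trace_tensorProd_mul_permOp (d κ : ℕ) (hd : 0 < d) (hκ : 0 < κ)
    (π : Equiv.Perm (Fin κ)) (A : Fin κ → Matrix (Fin d) (Fin d) ℂ) :
    (∀ l : Fin κ, orbitFactor d κ π A (π l) = orbitFactor d κ π A l) ∧
    ∀ R : Finset (Fin κ),
      (∀ x : Fin κ, ∃! l : Fin κ, l ∈ R ∧ π.SameCycle l x) →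
      (tensorProd d κ A * permOp d κ π).trace = ∏ l ∈ R, orbitFactor d κ π A l := by
  constructor
  · -- independence of orbit representative
    intro l
    have hpos := aux_pos π l
    have hmem : l ∈ Function.periodicPts (⇑π) :=
      Function.minimalPeriod_pos_iff_mem_periodicPts.mp hpos
    have hper : Function.minimalPeriod (⇑π) (π l) = Function.minimalPeriod (⇑π) l :=
      Function.minimalPeriod_apply hmem
    obtain ⟨k, hk⟩ : ∃ k, Function.minimalPeriod (⇑π) l = k + 1 :=
      ⟨_, (Nat.succ_pred_eq_of_pos hpos).symm⟩
    have hfixn : (π ^ (k + 1)) l = l := by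
      rw [← hk]
      have h := Function.isPeriodicPt_minimalPeriod (⇑π) l
      calc (π ^ Function.minimalPeriod (⇑π) l) l
          = (⇑π)^[Function.minimalPeriod (⇑π) l] l := by rw [Equiv.Perm.coe_pow]
        _ = l := h
    unfold orbitFactor
    rw [hper, hk]
    conv_lhs => rw [List.range_succ_eq_map]
    conv_rhs => rw [List.range_succ]
    rw [List.map_cons, List.map_map, List.prod_cons, List.map_append, List.map_singleton,
      List.prod_append, List.prod_singleton]
    have hshift : ((fun m => A ((π ^ m)⁻¹ (π l))) ∘ Nat.succ) = fun m => A ((π ^ m)⁻¹ l) := by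
      funext m
      simp only [Function.comp_apply]
      refine congrArg A ?_
      show (π ^ (m + 1))⁻¹ (π l) = (π ^ m)⁻¹ l
      rw [pow_succ', _root_.mul_inv_rev, Equiv.Perm.mul_apply, Equiv.Perm.inv_def π, Equiv.symm_apply_apply]
    have hzero : A ((π ^ 0)⁻¹ (π l)) = A ((π ^ k)⁻¹ l) := by
      refine congrArg A ?_
      rw [pow_zero, inv_one]
      show π l = (π ^ k)⁻¹ l
      calc π l = (π ^ k)⁻¹ ((π ^ k) (π l)) := (Equiv.symm_apply_apply _ _).symm
        _ = (π ^ k)⁻¹ l := by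
            refine congrArg (fun z => (π ^ k)⁻¹ z) ?_
            calc (π ^ k) (π l) = (π ^ (k+1)) l := by
                  rw [← Equiv.Perm.mul_apply, ← pow_succ]
              _ = l := hfixn
    rw [hshift, hzero]
    exact Matrix.trace_mul_comm _ _
  · -- the trace formula
    intro R hR
    classical
    let S : Fin κ → Fin κ := fun i => (hR i).choose
    have hS1 : ∀ i, S i ∈ R ∧ π.SameCycle (S i) i := fun i => (hR i).choose_spec.1
    have hS2 : ∀ i l, l ∈ R → π.SameCycle l i → l = S i :=
      fun i l h1 h2 => (hR i).choose_spec.2 l ⟨h1, h2⟩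
    have hfix : ∀ i, S (π⁻¹ i) = S i := by
      intro i
      refine (hS2 (π⁻¹ i) (S i) (hS1 i).1 ?_).symm
      exact (hS1 i).2.trans ⟨-1, by simp⟩
    have hSiff : ∀ l, l ∈ R → ∀ i, S i = l ↔ π.SameCycle l i := by
      intro l hl i
      constructor
      · intro h
        rw [← h]
        exact (hS1 i).2
      · intro h
        exact (hS2 i l hl h).symm
    calc (tensorProd d κ A * permOp d κ π).trace
        = ∑ f : Fin κ → Fin d, ∏ i, A i (f i) (f (π⁻¹ i)) := by
          rw [Matrix.trace]
          apply Finset.sum_congr rfl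
          intro f _
          simp only [Matrix.diag_apply, Matrix.mul_apply, tensorProd, permOp, Matrix.of_apply]
          rw [Finset.sum_eq_single (f ∘ ⇑π⁻¹)
            (fun g _ hg => by rw [if_neg hg, mul_zero])
            (fun h => absurd (Finset.mem_univ _) h)]
          rw [if_pos rfl, mul_one]
          rfl
      _ = ∑ f : Fin κ → Fin d, ∏ l : Fin κ,
            ∏ i : {i : Fin κ // S i = l}, A i.1 (f i.1) (f (π⁻¹ i.1)) := by
          apply Finset.sum_congr rfl
          intro f _
          exact (Fintype.prod_fiberwise S (fun i => A i (f i) (f (π⁻¹ i)))).symm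
      _ = ∑ p : (l : Fin κ) → ({i : Fin κ // S i = l} → Fin d), ∏ l : Fin κ,
            ∏ i : {i : Fin κ // S i = l},
              A i.1 (p l i) (p l ⟨π⁻¹ i.1, by rw [hfix]; exact i.2⟩) := by
          apply Fintype.sum_equiv
            (⟨fun f l i => f i.1, fun p i => p (S i) ⟨i, rfl⟩,
              fun f => rfl,
              fun p => funext fun l => funext fun i => by
                rcases i with ⟨v, hv⟩
                subst hv
                rfl⟩ :
              (Fin κ → Fin d) ≃ ((l : Fin κ) → ({i : Fin κ // S i = l} → Fin d)))
          intro f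
          rfl
      _ = ∏ l : Fin κ, ∑ h : {i : Fin κ // S i = l} → Fin d,
            ∏ i : {i : Fin κ // S i = l},
              A i.1 (h i) (h ⟨π⁻¹ i.1, by rw [hfix]; exact i.2⟩) := by
          rw [Finset.prod_univ_sum, Fintype.piFinset_univ]
      _ = ∏ l ∈ R, ∑ h : {i : Fin κ // S i = l} → Fin d,
            ∏ i : {i : Fin κ // S i = l},
              A i.1 (h i) (h ⟨π⁻¹ i.1, by rw [hfix]; exact i.2⟩) := by
          refine (Finset.prod_subset (Finset.subset_univ R) ?_).symm
          intro l _ hl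
          haveI : IsEmpty {i : Fin κ // S i = l} :=
            ⟨fun i => hl (by rw [← i.2]; exact (hS1 i.1).1)⟩
          simp
      _ = ∏ l ∈ R, orbitFactor d κ π A l := by
          apply Finset.prod_congr rfl
          intro l hl
          exact (orbit_expand d κ π A l S hfix (hSiff l hl)).symm

end
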